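/- Let Z = [[Z¹¹, Z¹²],[(Z¹²)ᵀ, Z²²]] be a positive semidefinite matrix in ℝ^{(d₁+d₂)×(d₁+d₂)}. Then the nuclear norm of the off-diagonal block satisfies ‖Z¹²‖_* ≤ (1/2)(Trace(Z¹¹) + Trace(Z²²)). -/

import Mathlib

/-- The nuclear norm of a real matrix: the sum of its singular values, i.e. the sum of
the square roots of the eigenvalues of `Mᵀ M`. -/
noncomputable def nuclearNorm {d₁ d₂ : ℕ} (M : Matrix (Fin d₁) (Fin d₂) ℝ) : ℝ :=
  ∑ i, Real.sqrt ((Matrix.isHermitian_conjTranspose_mul_self M).eigenvalues i)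

namespace Stmt13Aux

open Matrix

/-- trace of a real PSD matrix is nonnegative -/
lemma trace_nonneg_of_psd {m : ℕ} {B : Matrix (Fin m) (Fin m) ℝ} (hB : B.PosSemidef) :
    0 ≤ B.trace := by
  refine Finset.sum_nonneg fun i _ => ?_
  simpa [dotProduct, Matrix.mulVec, Pi.single_apply, Finset.sum_ite_eq] using
    hB.dotProduct_mulVec_nonneg (Pi.single i 1)

lemma trace_rows {n m : ℕ} (B : Matrix (Fin m) (Fin m) ℝ) (w : Fin n → Fin m → ℝ) :
    (Matrix.of w * B * (Matrix.of w)ᵀ).trace = ∑ i, w i ⬝ᵥ (B *ᵥ w i) := by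
  refine Finset.sum_congr rfl fun i _ => ?_
  simp only [Matrix.diag_apply, Matrix.mul_apply, Matrix.of_apply, Matrix.transpose_apply,
    dotProduct, Matrix.mulVec, Finset.sum_mul, Finset.mul_sum]
  rw [Finset.sum_comm]
  exact Finset.sum_congr rfl fun k _ => Finset.sum_congr rfl fun j _ => by ring

lemma sum_dot_eq_trace {m : ℕ} (B : Matrix (Fin m) (Fin m) ℝ) (w : Fin m → Fin m → ℝ)
    (hw : ∀ i j, w i ⬝ᵥ w j = if i = j then 1 else 0) :
    ∑ i, w i ⬝ᵥ (B *ᵥ w i) = B.trace := by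
  set W : Matrix (Fin m) (Fin m) ℝ := Matrix.of w with hW
  have hWWt : W * Wᵀ = 1 := by
    ext i j
    simpa [hW, Matrix.mul_apply, Matrix.one_apply, dotProduct] using hw i j
  have hWtW : Wᵀ * W = 1 := mul_eq_one_comm.mp hWWt
  rw [← trace_rows B w, ← hW, Matrix.trace_mul_cycle, hWtW, Matrix.one_mul]

lemma sum_dot_le_trace {n m : ℕ} {B : Matrix (Fin m) (Fin m) ℝ} (hB : B.PosSemidef)
    (u : Fin n → Fin m → ℝ) (ε : Fin n → ℝ)
    (hu : ∀ i j, u i ⬝ᵥ u j = if i = j then ε i else 0)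
    (hε : ∀ i, ε i = 0 ∨ ε i = 1)
    (hzero : ∀ i, ε i = 0 → u i = 0) :
    ∑ i, u i ⬝ᵥ (B *ᵥ u i) ≤ B.trace := by
  set U : Matrix (Fin n) (Fin m) ℝ := Matrix.of u with hUdef
  have hUUt : U * Uᵀ = Matrix.diagonal ε := by
    ext i j
    by_cases h : i = j <;>
      simpa [hUdef, Matrix.mul_apply, Matrix.diagonal_apply, dotProduct, h] using hu i j
  have hdU : Matrix.diagonal ε * U = U := by
    ext i j
    rcases hε i with h | h
    · simp [Matrix.diagonal_mul, h, hUdef, congrFun (hzero i h) j]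
    · simp [Matrix.diagonal_mul, h]
  set P : Matrix (Fin m) (Fin m) ℝ := Uᵀ * U with hPdef
  have hPsym : Pᵀ = P := by
    rw [hPdef, Matrix.transpose_mul, Matrix.transpose_transpose]
  have hPP : P * P = P := by
    rw [hPdef, Matrix.mul_assoc, ← Matrix.mul_assoc U, hUUt, hdU]
  have hQsym : (1 - P)ᵀ = 1 - P := by
    rw [Matrix.transpose_sub, Matrix.transpose_one, hPsym]
  have hQQ : (1 - P) * (1 - P) = 1 - P := by
    simp [Matrix.mul_sub, Matrix.sub_mul, hPP]
  have hpsd : ((1 - P) * B * (1 - P)).trace = (B * (1 - P)).trace := by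
    rw [Matrix.mul_assoc, Matrix.trace_mul_comm, Matrix.mul_assoc, hQQ]
  have hconj : ((1 - P) * B * (1 - P)).PosSemidef := by
    have := hB.mul_mul_conjTranspose_same (1 - P)
    rwa [Matrix.conjTranspose_eq_transpose_of_trivial, hQsym] at this
  have htr : 0 ≤ (B * (1 - P)).trace := hpsd ▸ trace_nonneg_of_psd hconj
  have hsum : ∑ i, u i ⬝ᵥ (B *ᵥ u i) = (B * P).trace := by
    rw [← trace_rows B u, ← hUdef, Matrix.trace_mul_cycle, ← hPdef, Matrix.trace_mul_comm]
  have hexp : (B * (1 - P)).trace = B.trace - (B * P).trace := by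
    rw [Matrix.mul_sub, Matrix.mul_one, Matrix.trace_sub]
  rw [hsum]
  linarith

lemma key_ineq {d₁ d₂ : ℕ} (Z : Matrix (Fin d₁ ⊕ Fin d₂) (Fin d₁ ⊕ Fin d₂) ℝ)
    (hZ : Z.PosSemidef) (u : Fin d₁ → ℝ) (v : Fin d₂ → ℝ) :
    2 * (u ⬝ᵥ (Z.toBlocks₁₂ *ᵥ v)) ≤ u ⬝ᵥ (Z.toBlocks₁₁ *ᵥ u) + v ⬝ᵥ (Z.toBlocks₂₂ *ᵥ v) := by
  have h21 : Z.toBlocks₂₁ = Z.toBlocks₁₂ᵀ := by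
    ext i j
    have := congrFun (congrFun hZ.1 (Sum.inr i)) (Sum.inl j)
    simpa [Matrix.toBlocks₂₁, Matrix.toBlocks₁₂, Matrix.conjTranspose_apply] using this.symm
  have h0 := hZ.dotProduct_mulVec_nonneg (Sum.elim u (-v))
  rw [show Z = Matrix.fromBlocks Z.toBlocks₁₁ Z.toBlocks₁₂ Z.toBlocks₂₁ Z.toBlocks₂₂ from
    (Matrix.fromBlocks_toBlocks Z).symm, Matrix.fromBlocks_mulVec] at h0
  rw [star_trivial, sumElim_dotProduct_sumElim] at h0
  have hvu : v ⬝ᵥ (Z.toBlocks₂₁ *ᵥ u) = u ⬝ᵥ (Z.toBlocks₁₂ *ᵥ v) := by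
    rw [h21, Matrix.mulVec_transpose, dotProduct_comm, Matrix.dotProduct_mulVec]
  simp only [Sum.elim_comp_inl, Sum.elim_comp_inr, Matrix.mulVec_neg, dotProduct_add,
    dotProduct_neg, neg_dotProduct, neg_neg, hvu] at h0
  linarith

end Stmt13Aux

/-- if `Z = [[Z¹¹, Z¹²],[(Z¹²)ᵀ, Z²²]]` is positive semidefinite, then
`‖Z¹²‖_* ≤ (1/2)(Trace Z¹¹ + Trace Z²²)`. -/
theorem stmt13 {d₁ d₂ : ℕ}
    (Z : Matrix (Fin d₁ ⊕ Fin d₂) (Fin d₁ ⊕ Fin d₂) ℝ) (hZ : Z.PosSemidef) :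
    nuclearNorm Z.toBlocks₁₂ ≤ (1 / 2) * (Z.toBlocks₁₁.trace + Z.toBlocks₂₂.trace) := by
  classical
  open Matrix Stmt13Aux in
  set M := Z.toBlocks₁₂ with hMdef
  have hM : (Mᵀ * M).IsHermitian := Matrix.isHermitian_conjTranspose_mul_self M
  have hPSD : (Mᵀ * M).PosSemidef := by
    have h := Matrix.posSemidef_conjTranspose_mul_self M
    rwa [Matrix.conjTranspose_eq_transpose_of_trivial] at h
  set lam : Fin d₂ → ℝ := hM.eigenvalues with hlamdef
  have hlam0 : ∀ i, 0 ≤ lam i := fun i => hPSD.eigenvalues_nonneg i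
  set v : Fin d₂ → Fin d₂ → ℝ := fun i => ⇑(hM.eigenvectorBasis i) with hvdef
  have hv_eig : ∀ i, (Mᵀ * M) *ᵥ v i = lam i • v i := fun i => hM.mulVec_eigenvectorBasis i
  have hv_ortho : ∀ i j, v i ⬝ᵥ v j = if i = j then 1 else 0 := by
    intro i j
    have h := orthonormal_iff_ite.mp hM.eigenvectorBasis.orthonormal i j
    rw [dotProduct_comm]
    simpa [EuclideanSpace.inner_eq_star_dotProduct] using h
  have hMv : ∀ i j, (M *ᵥ v i) ⬝ᵥ (M *ᵥ v j) = if i = j then lam j else 0 := by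
    intro i j
    have h1 : v i ⬝ᵥ ((Mᵀ * M) *ᵥ v j) = (M *ᵥ v i) ⬝ᵥ (M *ᵥ v j) := by
      rw [← Matrix.mulVec_mulVec, Matrix.dotProduct_mulVec, Matrix.vecMul_transpose]
    rw [← h1, hv_eig, dotProduct_smul, hv_ortho]
    by_cases hij : i = j <;> simp [hij]
  set ε : Fin d₂ → ℝ := fun i => if lam i = 0 then 0 else 1 with hεdef
  set u : Fin d₂ → Fin d₁ → ℝ :=
    fun i => if lam i = 0 then 0 else (Real.sqrt (lam i))⁻¹ • (M *ᵥ v i) with hudef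
  have hzero : ∀ i, ε i = 0 → u i = 0 := by
    intro i h
    by_cases hi : lam i = 0
    · simp [hudef, hi]
    · simp [hεdef, hi] at h
  have hε : ∀ i, ε i = 0 ∨ ε i = 1 := by
    intro i; by_cases hi : lam i = 0 <;> simp [hεdef, hi]
  have hu_ortho : ∀ i j, u i ⬝ᵥ u j = if i = j then ε i else 0 := by
    intro i j
    by_cases hi : lam i = 0
    · simp [hudef, hεdef, hi]
    · by_cases hj : lam j = 0
      · have hij : i ≠ j := fun h => hi (h ▸ hj)
        simp [hudef, hi, hj, hij]
      · simp only [hudef, hεdef, if_neg hi, if_neg hj]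
        rw [smul_dotProduct, dotProduct_smul, hMv i j]
        by_cases hij : i = j
        · subst hij
          have hs : Real.sqrt (lam i) * Real.sqrt (lam i) = lam i :=
            Real.mul_self_sqrt (hlam0 i)
          have hsn : Real.sqrt (lam i) ≠ 0 :=
            Real.sqrt_ne_zero'.mpr (lt_of_le_of_ne (hlam0 i) (Ne.symm hi))
          have key : (Real.sqrt (lam i))⁻¹ * ((Real.sqrt (lam i))⁻¹ * lam i) = 1 := by
            field_simp
            rw [sq, hs]
          simp only [eq_self_iff_true, if_true, smul_eq_mul]
          exact key
        · simp [hij]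
  have hMuv : ∀ i, u i ⬝ᵥ (M *ᵥ v i) = Real.sqrt (lam i) := by
    intro i
    by_cases hi : lam i = 0
    · simp [hudef, hi]
    · have hs : Real.sqrt (lam i) * Real.sqrt (lam i) = lam i :=
        Real.mul_self_sqrt (hlam0 i)
      have hsn : Real.sqrt (lam i) ≠ 0 :=
        Real.sqrt_ne_zero'.mpr (lt_of_le_of_ne (hlam0 i) (Ne.symm hi))
      have key : (Real.sqrt (lam i))⁻¹ * lam i = Real.sqrt (lam i) := by
        field_simp
        rw [sq, hs]
      simp only [hudef, if_neg hi, smul_dotProduct, hMv i i, eq_self_iff_true, if_true,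
        smul_eq_mul]
      exact key
  have step : ∀ i, Real.sqrt (lam i) ≤
      (1 / 2) * (u i ⬝ᵥ (Z.toBlocks₁₁ *ᵥ u i) + v i ⬝ᵥ (Z.toBlocks₂₂ *ᵥ v i)) := by
    intro i
    have h := key_ineq Z hZ (u i) (v i)
    rw [← hMdef, hMuv i] at h
    linarith
  have h11 : Z.toBlocks₁₁.PosSemidef := hZ.submatrix Sum.inl
  have h1 := sum_dot_le_trace h11 u ε hu_ortho hε hzero
  have h2 := sum_dot_eq_trace Z.toBlocks₂₂ v hv_ortho
  calc nuclearNorm M = ∑ i, Real.sqrt (lam i) := rfl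
    _ ≤ ∑ i, (1 / 2) * (u i ⬝ᵥ (Z.toBlocks₁₁ *ᵥ u i) + v i ⬝ᵥ (Z.toBlocks₂₂ *ᵥ v i)) :=
        Finset.sum_le_sum fun i _ => step i
    _ = (1 / 2) * ((∑ i, u i ⬝ᵥ (Z.toBlocks₁₁ *ᵥ u i)) + ∑ i, v i ⬝ᵥ (Z.toBlocks₂₂ *ᵥ v i)) := by
        rw [← Finset.mul_sum, Finset.sum_add_distrib]
    _ ≤ (1 / 2) * (Z.toBlocks₁₁.trace + Z.toBlocks₂₂.trace) := by linarith
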